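/- Let σ be a positive definite density matrix and define M(A) = ∫₀¹ σ^{1−s} A σ^s ds on M_n(ℂ). Then M is invertible with inverse M^{-1}(A) = ∫₀^∞ (t+σ)^{-1} A (t+σ)^{-1} dt, and the map A ↦ M^{-1}(σ^{1/2} A σ^{1/2}) = ∫₀^∞ (σ^{1/2}/(t+σ)) A (σ^{1/2}/(t+σ)) dt is completely positive and unital (it maps the identity to the identity). -/

import Mathlib

open Matrix MeasureTheory
open scoped ComplexOrder


open Matrix MeasureTheory Set Filter
open scoped ComplexOrder

namespace Stmt16Aux

lemma contRpow {c : ℝ} (hc : 0 < c) : Continuous (fun s : ℝ => c ^ s) := by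
  have : (fun s : ℝ => c ^ s) = fun s => Real.exp (Real.log c * s) := by
    funext s; rw [Real.rpow_def_of_pos hc]
  rw [this]; fun_prop

lemma m_int {a b : ℝ} (ha : 0 < a) (hb : 0 < b) :
    IntegrableOn (fun s : ℝ => a ^ (1 - s) * b ^ s) (Ioc 0 1) := by
  apply Continuous.integrableOn_Ioc
  exact (((contRpow ha).comp (by fun_prop : Continuous (fun s : ℝ => 1 - s)))).mul (contRpow hb)

lemma m_eq_of_eq {a : ℝ} (ha : 0 < a) :
    ∫ s in Ioc (0:ℝ) 1, a ^ (1 - s) * a ^ s = a := by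
  have : ∀ s : ℝ, a ^ (1 - s) * a ^ s = a := by
    intro s
    rw [← Real.rpow_add ha]; norm_num
  simp only [this]
  simp [Real.volume_Ioc]

lemma m_eq_of_ne {a b : ℝ} (ha : 0 < a) (hb : 0 < b) (hab : a ≠ b) :
    ∫ s in Ioc (0:ℝ) 1, a ^ (1 - s) * b ^ s
      = (b - a) / (Real.log b - Real.log a) := by
  have hL : Real.log b - Real.log a ≠ 0 := by
    intro h
    exact hab ((Real.log_injOn_pos (mem_Ioi.mpr ha) (mem_Ioi.mpr hb) (by linarith)))
  set L := Real.log b - Real.log a with hLdef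
  have h1 : ∀ s : ℝ, a ^ (1 - s) * b ^ s = a * Real.exp (L * s) := by
    intro s
    rw [Real.rpow_def_of_pos ha, Real.rpow_def_of_pos hb, ← Real.exp_add]
    conv_rhs => rw [← Real.exp_log ha]
    rw [← Real.exp_add, hLdef]
    congr 1; ring
  simp only [h1]
  rw [MeasureTheory.integral_const_mul]
  have h2 : ∫ s in Ioc (0:ℝ) 1, Real.exp (L * s) = (Real.exp L - 1) / L := by
    rw [← intervalIntegral.integral_of_le (by norm_num : (0:ℝ) ≤ 1),
      intervalIntegral.integral_comp_mul_left Real.exp hL]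
    simp [integral_exp, div_eq_inv_mul]
  rw [h2]
  have hexp : Real.exp L = b / a := by
    rw [hLdef, Real.exp_sub, Real.exp_log ha, Real.exp_log hb]
  rw [hexp]
  field_simp

-- antiderivative setup for the a ≠ b case
lemma k_deriv {a b : ℝ} (ha : 0 < a) (hb : 0 < b) (hab : a ≠ b) {t : ℝ} (ht : t ∈ Ioi (0:ℝ)) :
    HasDerivAt (fun t : ℝ => (Real.log (t + a) - Real.log (t + b)) / (b - a))
      ((t + a)⁻¹ * (t + b)⁻¹) t := by
  have hta : (0:ℝ) < t + a := by have := ht.out; linarith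
  have htb : (0:ℝ) < t + b := by have := ht.out; linarith
  have h1 : HasDerivAt (fun t : ℝ => Real.log (t + a)) (t + a)⁻¹ t := by
    simpa [Function.comp_def] using (Real.hasDerivAt_log hta.ne').comp t ((hasDerivAt_id t).add_const a)
  have h2 : HasDerivAt (fun t : ℝ => Real.log (t + b)) (t + b)⁻¹ t := by
    simpa [Function.comp_def] using (Real.hasDerivAt_log htb.ne').comp t ((hasDerivAt_id t).add_const b)
  have h3 := (h1.sub h2).div_const (b - a)
  have hba : b - a ≠ 0 := sub_ne_zero.mpr (Ne.symm hab)
  refine h3.congr_deriv ?_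
  rw [div_eq_iff hba]
  field_simp
  ring

lemma k_tendsto {a b : ℝ} :
    Tendsto (fun t : ℝ => (Real.log (t + a) - Real.log (t + b)) / (b - a)) atTop (nhds 0) := by
  have h : Tendsto (fun t : ℝ => Real.log (t + a) - Real.log (t + b)) atTop (nhds 0) := by
    have : (fun t : ℝ => Real.log (t + a) - Real.log (t + b))
        =ᶠ[atTop] fun t => Real.log ((t + a) / (t + b)) := by
      filter_upwards [eventually_gt_atTop (max (-a) (-b))] with t ht
      rw [Real.log_div (by simp at ht; linarith [ht.1]) (by simp at ht; linarith [ht.2])]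
    rw [tendsto_congr' this]
    have h2 : Tendsto (fun t : ℝ => (t + a) / (t + b)) atTop (nhds 1) := by
      have he : (fun t : ℝ => (t + a) / (t + b)) =ᶠ[atTop] fun t => 1 + (a - b) / (t + b) := by
        filter_upwards [eventually_gt_atTop (-b)] with t ht
        have : t + b ≠ 0 := by linarith
        field_simp
        ring
      rw [tendsto_congr' he]
      have : Tendsto (fun t : ℝ => (a - b) / (t + b)) atTop (nhds 0) := by
        apply Tendsto.div_atTop tendsto_const_nhds
        exact tendsto_atTop_add_const_right _ b tendsto_id
      simpa using tendsto_const_nhds.add this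
    have := (Real.continuousAt_log (by norm_num : (1:ℝ) ≠ 0)).tendsto.comp h2
    simpa [Function.comp_def] using this
  simpa using h.div_const (b - a)

lemma k_nonneg {a b : ℝ} (ha : 0 < a) (hb : 0 < b) {t : ℝ} (ht : t ∈ Ioi (0:ℝ)) :
    0 ≤ (t + a)⁻¹ * (t + b)⁻¹ := by
  have := ht.out
  positivity

lemma k_cont {a b : ℝ} (ha : 0 < a) (hb : 0 < b) (hab : a ≠ b) :
    ContinuousWithinAt (fun t : ℝ => (Real.log (t + a) - Real.log (t + b)) / (b - a))
      (Ici 0) 0 := by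
  apply ContinuousAt.continuousWithinAt
  have h1 : ContinuousAt (fun t : ℝ => Real.log (t + a)) 0 := by
    apply (Real.continuousAt_log (by simpa using ha.ne')).comp
    fun_prop
  have h2 : ContinuousAt (fun t : ℝ => Real.log (t + b)) 0 := by
    apply (Real.continuousAt_log (by simpa using hb.ne')).comp
    fun_prop
  exact (h1.sub h2).div_const _

lemma k_int_ne {a b : ℝ} (ha : 0 < a) (hb : 0 < b) (hab : a ≠ b) :
    IntegrableOn (fun t : ℝ => (t + a)⁻¹ * (t + b)⁻¹) (Ioi 0) :=
  integrableOn_Ioi_deriv_of_nonneg (k_cont ha hb hab) (fun t ht => k_deriv ha hb hab ht)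
    (fun t ht => k_nonneg ha hb ht) k_tendsto

lemma k_eq_of_ne {a b : ℝ} (ha : 0 < a) (hb : 0 < b) (hab : a ≠ b) :
    ∫ t in Ioi (0:ℝ), (t + a)⁻¹ * (t + b)⁻¹ = (Real.log b - Real.log a) / (b - a) := by
  rw [integral_Ioi_of_hasDerivAt_of_nonneg (k_cont ha hb hab) (fun t ht => k_deriv ha hb hab ht)
    (fun t ht => k_nonneg ha hb ht) k_tendsto]
  simp only [zero_add]
  field_simp
  ring

lemma k_deriv_eq {a : ℝ} (ha : 0 < a) {t : ℝ} (ht : t ∈ Ioi (0:ℝ)) :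
    HasDerivAt (fun t : ℝ => -(t + a)⁻¹) ((t + a)⁻¹ * (t + a)⁻¹) t := by
  have hta : (0:ℝ) < t + a := by have := ht.out; linarith
  have h1 : HasDerivAt (fun t : ℝ => (t + a)) 1 t := (hasDerivAt_id t).add_const a
  have := (h1.inv hta.ne').neg
  refine this.congr_deriv ?_
  rw [neg_div, neg_neg, one_div, sq, mul_inv]

lemma k_cont_eq {a : ℝ} (ha : 0 < a) :
    ContinuousWithinAt (fun t : ℝ => -(t + a)⁻¹) (Ici 0) 0 := by
  apply ContinuousAt.continuousWithinAt
  have : ContinuousAt (fun t : ℝ => t + a) 0 := by fun_prop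
  exact (this.inv₀ (by simpa using ha.ne')).neg

lemma k_tendsto_eq {a : ℝ} : Tendsto (fun t : ℝ => -(t + a)⁻¹) atTop (nhds 0) := by
  have : Tendsto (fun t : ℝ => (t + a)⁻¹) atTop (nhds 0) :=
    Tendsto.inv_tendsto_atTop (tendsto_atTop_add_const_right _ a tendsto_id)
  simpa using this.neg

lemma k_int_eq {a : ℝ} (ha : 0 < a) :
    IntegrableOn (fun t : ℝ => (t + a)⁻¹ * (t + a)⁻¹) (Ioi 0) :=
  integrableOn_Ioi_deriv_of_nonneg (k_cont_eq ha) (fun t ht => k_deriv_eq ha ht)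
    (fun t ht => k_nonneg ha ha ht) k_tendsto_eq

lemma k_eq_of_eq {a : ℝ} (ha : 0 < a) :
    ∫ t in Ioi (0:ℝ), (t + a)⁻¹ * (t + a)⁻¹ = a⁻¹ := by
  rw [integral_Ioi_of_hasDerivAt_of_nonneg (k_cont_eq ha) (fun t ht => k_deriv_eq ha ht)
    (fun t ht => k_nonneg ha ha ht) k_tendsto_eq]
  simp


variable {n : ℕ}

/-- Entrywise integral of conjugated diagonal products. -/
lemma integral_conj_rep (μ : Measure ℝ) (U A : Matrix (Fin n) (Fin n) ℂ)
    (v w : ℝ → Fin n → ℝ)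
    (hint : ∀ a b : Fin n, Integrable (fun t => v t a * w t b) μ) :
    (Matrix.of fun i k => ∫ t, (U * (Matrix.diagonal (fun a => ((v t a : ℝ) : ℂ)) * A *
        Matrix.diagonal (fun b => ((w t b : ℝ) : ℂ))) * Uᴴ) i k ∂μ)
      = U * (Matrix.of fun a b : Fin n =>
          (((∫ t, v t a * w t b ∂μ : ℝ) : ℂ)) * A a b) * Uᴴ := by
  ext i k
  have hentry : ∀ t, (U * (Matrix.diagonal (fun a => ((v t a : ℝ) : ℂ)) * A *
      Matrix.diagonal (fun b => ((w t b : ℝ) : ℂ))) * Uᴴ) i k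
      = ∑ j : Fin n, ∑ a : Fin n,
          (U i a * A a j * Uᴴ j k) * (((v t a * w t j : ℝ)) : ℂ) := by
    intro t
    simp only [Matrix.mul_apply, Matrix.diagonal_apply, ite_mul, mul_ite, mul_zero, zero_mul,
      Finset.sum_ite_eq, Finset.sum_ite_eq', Finset.mem_univ, if_true, Finset.sum_mul]
    refine Finset.sum_congr rfl fun j _ => Finset.sum_congr rfl fun a _ => ?_
    push_cast
    ring
  simp only [Matrix.of_apply, hentry]
  rw [integral_finset_sum]
  · have : ∀ j : Fin n, ∫ t, (∑ a : Fin n,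
        (U i a * A a j * Uᴴ j k) * (((v t a * w t j : ℝ)) : ℂ)) ∂μ
        = ∑ a : Fin n, (U i a * A a j * Uᴴ j k) * (((∫ t, v t a * w t j ∂μ : ℝ)) : ℂ) := by
      intro j
      rw [integral_finset_sum]
      · refine Finset.sum_congr rfl fun a _ => ?_
        rw [MeasureTheory.integral_const_mul]
        congr 1
        exact integral_ofReal
      · intro a _
        exact (Complex.ofRealCLM.integrable_comp (hint a j)).const_mul _
    simp only [this]
    simp only [Matrix.mul_apply, Matrix.of_apply, Finset.sum_mul]
    refine Finset.sum_congr rfl fun j _ => Finset.sum_congr rfl fun a _ => ?_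
    ring
  · intro j _
    apply integrable_finset_sum
    intro a _
    exact (Complex.ofRealCLM.integrable_comp (hint a j)).const_mul _

/-- An entrywise integral of a family of PSD matrices is PSD. -/
lemma posSemidef_integral {m : Type*} [Fintype m] [DecidableEq m] (μ : Measure ℝ)
    (C : ℝ → Matrix m m ℂ) (hpos : ∀ t, (C t).PosSemidef)
    (hint : ∀ a b, Integrable (fun t => C t a b) μ) :
    (Matrix.of fun a b => ∫ t, C t a b ∂μ).PosSemidef := by
  rw [Matrix.posSemidef_iff_dotProduct_mulVec]
  constructor
  · ext a b
    simp only [conjTranspose_apply, Matrix.of_apply, RCLike.star_def]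
    rw [← integral_conj]
    congr 1
    funext t
    have := (hpos t).1
    calc (starRingEnd ℂ) (C t b a) = (C t)ᴴ a b := rfl
    _ = C t a b := by rw [this]
  · intro x
    have hswap : star x ⬝ᵥ ((Matrix.of fun a b => ∫ t, C t a b ∂μ) *ᵥ x)
        = ∫ t, star x ⬝ᵥ (C t *ᵥ x) ∂μ := by
      simp only [dotProduct, mulVec, Matrix.of_apply, Pi.star_apply]
      rw [integral_finset_sum]
      · refine Finset.sum_congr rfl fun a _ => ?_
        rw [MeasureTheory.integral_const_mul]
        congr 1
        rw [integral_finset_sum]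
        · refine Finset.sum_congr rfl fun b _ => ?_
          rw [MeasureTheory.integral_mul_const]
        · intro b _
          exact ((hint a b).mul_const _)
      · intro a _
        apply Integrable.const_mul
        apply integrable_finset_sum
        intro b _
        exact ((hint a b).mul_const _)
    rw [hswap]
    have hre : ∀ t, star x ⬝ᵥ (C t *ᵥ x) = (((star x ⬝ᵥ (C t *ᵥ x)).re : ℝ) : ℂ) := by
      intro t
      have h0 := (hpos t).dotProduct_mulVec_nonneg x
      rw [Complex.nonneg_iff] at h0
      exact (Complex.ext (by simp) (by simp [h0.2])).symm
    calc (0:ℂ) ≤ (((∫ t, (star x ⬝ᵥ (C t *ᵥ x)).re ∂μ : ℝ)) : ℂ) := by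
          rw [Complex.zero_le_real]
          apply integral_nonneg
          intro t
          have h0 := (hpos t).dotProduct_mulVec_nonneg x
          rw [Complex.nonneg_iff] at h0
          exact h0.1
      _ = ∫ t, (((star x ⬝ᵥ (C t *ᵥ x)).re : ℝ) : ℂ) ∂μ := integral_ofReal.symm
      _ = ∫ t, star x ⬝ᵥ (C t *ᵥ x) ∂μ := by
          congr 1
          funext t
          exact (hre t).symm

lemma mk_one {a b : ℝ} (ha : 0 < a) (hb : 0 < b) :
    (∫ s in Ioc (0:ℝ) 1, a ^ (1 - s) * b ^ s) * (∫ t in Ioi (0:ℝ), (t + a)⁻¹ * (t + b)⁻¹) = 1 := by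
  rcases eq_or_ne a b with rfl | hab
  · rw [m_eq_of_eq ha, k_eq_of_eq ha]
    field_simp
  · rw [m_eq_of_ne ha hb hab, k_eq_of_ne ha hb hab]
    have hba : b - a ≠ 0 := sub_ne_zero.mpr (Ne.symm hab)
    have hL : Real.log b - Real.log a ≠ 0 := by
      intro h
      exact hab (Real.log_injOn_pos (mem_Ioi.mpr ha) (mem_Ioi.mpr hb) (by linarith))
    field_simp

lemma k_int {a b : ℝ} (ha : 0 < a) (hb : 0 < b) :
    IntegrableOn (fun t : ℝ => (t + a)⁻¹ * (t + b)⁻¹) (Ioi 0) := by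
  rcases eq_or_ne a b with rfl | hab
  · exact k_int_eq ha
  · exact k_int_ne ha hb hab

end Stmt16Aux


open Stmt16Aux in
/-- For a positive definite density matrix `σ`, the map `M(A) = ∫₀¹ σ^{1−s} A σ^s ds` is
invertible with inverse `M⁻¹(A) = ∫₀^∞ (t+σ)⁻¹ A (t+σ)⁻¹ dt`, and the map
`A ↦ M⁻¹(σ^{1/2} A σ^{1/2}) = ∫₀^∞ (σ^{1/2}/(t+σ)) A (σ^{1/2}/(t+σ)) dt` is completely
positive and unital. -/
theorem stmt_16 (n : ℕ) (σ : Matrix (Fin n) (Fin n) ℂ) (hσ : σ.PosDef) (htr : σ.trace = 1)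
    (Mop Minv : Matrix (Fin n) (Fin n) ℂ → Matrix (Fin n) (Fin n) ℂ)
    (hMop : ∀ A, Mop A = Matrix.of fun i k =>
        ∫ s in (0:ℝ)..1,
          (cfc (fun x : ℝ => x ^ (1 - s)) σ * A * cfc (fun x : ℝ => x ^ s) σ) i k)
    (hMinv : ∀ A, Minv A = Matrix.of fun i k =>
        ∫ t in Set.Ioi (0:ℝ),
          (((t : ℂ) • (1 : Matrix (Fin n) (Fin n) ℂ) + σ)⁻¹ * A *
            ((t : ℂ) • (1 : Matrix (Fin n) (Fin n) ℂ) + σ)⁻¹) i k) :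
    (∀ A, Minv (Mop A) = A) ∧ (∀ A, Mop (Minv A) = A) ∧
    -- the integral formula for `A ↦ M⁻¹(σ^{1/2} A σ^{1/2})`
    (∀ A, Minv (cfc (fun x : ℝ => x ^ ((2:ℝ)⁻¹)) σ * A * cfc (fun x : ℝ => x ^ ((2:ℝ)⁻¹)) σ)
        = Matrix.of fun i k =>
            ∫ t in Set.Ioi (0:ℝ),
              ((cfc (fun x : ℝ => x ^ ((2:ℝ)⁻¹)) σ *
                  ((t : ℂ) • (1 : Matrix (Fin n) (Fin n) ℂ) + σ)⁻¹) * A *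
                (((t : ℂ) • (1 : Matrix (Fin n) (Fin n) ℂ) + σ)⁻¹ *
                  cfc (fun x : ℝ => x ^ ((2:ℝ)⁻¹)) σ)) i k) ∧
    -- unitality
    Minv (cfc (fun x : ℝ => x ^ ((2:ℝ)⁻¹)) σ * 1 * cfc (fun x : ℝ => x ^ ((2:ℝ)⁻¹)) σ) = 1 ∧
    -- complete positivity
    (∀ k : ℕ, ∀ B : Matrix (Fin n × Fin k) (Fin n × Fin k) ℂ, B.PosSemidef →
      (Matrix.of fun p q : Fin n × Fin k =>
        (Minv (cfc (fun x : ℝ => x ^ ((2:ℝ)⁻¹)) σ *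
            (Matrix.of fun i j => B (i, p.2) (j, q.2)) *
            cfc (fun x : ℝ => x ^ ((2:ℝ)⁻¹)) σ)) p.1 q.1).PosSemidef) := by
  classical
  have hH : σ.IsHermitian := hσ.1
  set U : Matrix (Fin n) (Fin n) ℂ :=
    (Matrix.IsHermitian.eigenvectorUnitary hH : Matrix (Fin n) (Fin n) ℂ) with hUdef
  set lam : Fin n → ℝ := hH.eigenvalues with hlamdef
  have hlam : ∀ i, 0 < lam i := fun i => hσ.eigenvalues_pos i
  have hU1 : U * Uᴴ = 1 := by
    have := Matrix.mem_unitaryGroup_iff.mp (Matrix.IsHermitian.eigenvectorUnitary hH).2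
    simpa [Matrix.star_eq_conjTranspose, hUdef] using this
  have hU2 : Uᴴ * U = 1 := by
    have := Matrix.mem_unitaryGroup_iff'.mp (Matrix.IsHermitian.eigenvectorUnitary hH).2
    simpa [Matrix.star_eq_conjTranspose, hUdef] using this
  -- cfc in diagonal form
  have hcfc : ∀ f : ℝ → ℝ, cfc f σ
      = U * Matrix.diagonal (fun a => ((f (lam a) : ℝ) : ℂ)) * Uᴴ := by
    intro f
    rw [hH.cfc_eq, Matrix.IsHermitian.cfc]
    rfl
  have hspec : σ = U * Matrix.diagonal (fun a => ((lam a : ℝ) : ℂ)) * Uᴴ := by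
    conv_lhs => rw [hH.spectral_theorem]
    rfl
  -- algebraic helpers
  have hconj3 : ∀ (X A Y : Matrix (Fin n) (Fin n) ℂ),
      (U * X * Uᴴ) * A * (U * Y * Uᴴ) = U * (X * (Uᴴ * A * U) * Y) * Uᴴ := by
    intro X A Y
    simp only [Matrix.mul_assoc]
  have hmulUD : ∀ (X Y : Matrix (Fin n) (Fin n) ℂ),
      (U * X * Uᴴ) * (U * Y * Uᴴ) = U * (X * Y) * Uᴴ := by
    intro X Y
    calc (U * X * Uᴴ) * (U * Y * Uᴴ) = U * (X * ((Uᴴ * U) * (Y * Uᴴ))) := by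
          simp only [Matrix.mul_assoc]
      _ = U * (X * Y) * Uᴴ := by rw [hU2, one_mul]; simp only [Matrix.mul_assoc]
  have hsand : ∀ M : Matrix (Fin n) (Fin n) ℂ, Uᴴ * (U * M * Uᴴ) * U = M := by
    intro M
    calc Uᴴ * (U * M * Uᴴ) * U = (Uᴴ * U) * M * (Uᴴ * U) := by simp only [Matrix.mul_assoc]
      _ = M := by rw [hU2, one_mul, mul_one]
  have hsand' : ∀ M : Matrix (Fin n) (Fin n) ℂ, U * (Uᴴ * M * U) * Uᴴ = M := by
    intro M
    calc U * (Uᴴ * M * U) * Uᴴ = (U * Uᴴ) * M * (U * Uᴴ) := by simp only [Matrix.mul_assoc]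
      _ = M := by rw [hU1, one_mul, mul_one]
  -- resolvent in diagonal form
  have hres : ∀ t : ℝ, t ∈ Set.Ioi (0:ℝ) →
      ((t : ℂ) • (1 : Matrix (Fin n) (Fin n) ℂ) + σ)⁻¹
        = U * Matrix.diagonal (fun a => (((t + lam a)⁻¹ : ℝ) : ℂ)) * Uᴴ := by
    intro t ht
    have htpos : ∀ a, (0:ℝ) < t + lam a := fun a => by have := ht.out; have := hlam a; linarith
    have hsum : (t : ℂ) • (1 : Matrix (Fin n) (Fin n) ℂ) + σ
        = U * Matrix.diagonal (fun a => ((t + lam a : ℝ) : ℂ)) * Uᴴ := by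
      have h1 : Matrix.diagonal (fun a : Fin n => ((t + lam a : ℝ) : ℂ))
          = (t : ℂ) • (1 : Matrix (Fin n) (Fin n) ℂ)
            + Matrix.diagonal (fun a => ((lam a : ℝ) : ℂ)) := by
        rw [Matrix.smul_one_eq_diagonal, Matrix.diagonal_add]
        congr 1
        funext a
        push_cast
        ring
      rw [h1, Matrix.mul_add, Matrix.add_mul, ← hspec]
      congr 1
      rw [Matrix.mul_smul, Matrix.smul_mul, mul_one, hU1]
    rw [hsum]
    apply Matrix.inv_eq_right_inv
    rw [hmulUD, Matrix.diagonal_mul_diagonal]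
    have : (fun a => ((t + lam a : ℝ) : ℂ) * (((t + lam a)⁻¹ : ℝ) : ℂ)) = fun _ => (1:ℂ) := by
      funext a
      rw [← Complex.ofReal_mul, mul_inv_cancel₀ (htpos a).ne']
      simp
    rw [this, Matrix.diagonal_one, Matrix.mul_one, hU1]
  -- scalar kernels
  set mval : Fin n → Fin n → ℝ :=
    fun a b => ∫ s in Ioc (0:ℝ) 1, lam a ^ (1 - s) * lam b ^ s with hmvaldef
  set kval : Fin n → Fin n → ℝ :=
    fun a b => ∫ t in Ioi (0:ℝ), (t + lam a)⁻¹ * (t + lam b)⁻¹ with hkvaldef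
  have kint : ∀ a b, IntegrableOn (fun t : ℝ => (t + lam a)⁻¹ * (t + lam b)⁻¹) (Ioi 0) :=
    fun a b => k_int (hlam a) (hlam b)
  have hkm : ∀ a b, (kval a b : ℝ) * mval a b = 1 := by
    intro a b
    rw [mul_comm]
    exact mk_one (hlam a) (hlam b)
  -- diagonal representation of Mop
  have hMop' : ∀ A, Mop A
      = U * (Matrix.of fun a b => ((mval a b : ℝ) : ℂ) * (Uᴴ * A * U) a b) * Uᴴ := by
    intro A
    rw [hMop A]
    have hib : (Matrix.of fun i k => ∫ s in (0:ℝ)..1,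
        (cfc (fun x : ℝ => x ^ (1 - s)) σ * A * cfc (fun x : ℝ => x ^ s) σ) i k)
        = Matrix.of fun i k => ∫ s in Ioc (0:ℝ) 1,
        (cfc (fun x : ℝ => x ^ (1 - s)) σ * A * cfc (fun x : ℝ => x ^ s) σ) i k := by
      ext i k
      exact intervalIntegral.integral_of_le zero_le_one
    rw [hib]
    have hintegrand : ∀ s : ℝ,
        cfc (fun x : ℝ => x ^ (1 - s)) σ * A * cfc (fun x : ℝ => x ^ s) σ
        = U * (Matrix.diagonal (fun a => ((lam a ^ (1 - s) : ℝ) : ℂ)) * (Uᴴ * A * U) *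
            Matrix.diagonal (fun b => ((lam b ^ s : ℝ) : ℂ))) * Uᴴ := by
      intro s
      rw [hcfc, hcfc, hconj3]
    simp only [hintegrand]
    exact integral_conj_rep (volume.restrict (Ioc 0 1)) U (Uᴴ * A * U)
      (fun s a => lam a ^ (1 - s)) (fun s b => lam b ^ s)
      (fun a b => m_int (hlam a) (hlam b))
  -- diagonal representation of Minv
  have hMinv' : ∀ A, Minv A
      = U * (Matrix.of fun a b => ((kval a b : ℝ) : ℂ) * (Uᴴ * A * U) a b) * Uᴴ := by
    intro A
    rw [hMinv A]
    have hib : (Matrix.of fun i k => ∫ t in Set.Ioi (0:ℝ),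
        (((t : ℂ) • (1 : Matrix (Fin n) (Fin n) ℂ) + σ)⁻¹ * A *
          ((t : ℂ) • (1 : Matrix (Fin n) (Fin n) ℂ) + σ)⁻¹) i k)
        = Matrix.of fun i k => ∫ t in Set.Ioi (0:ℝ),
        (U * (Matrix.diagonal (fun a => (((t + lam a)⁻¹ : ℝ) : ℂ)) * (Uᴴ * A * U) *
            Matrix.diagonal (fun b => (((t + lam b)⁻¹ : ℝ) : ℂ))) * Uᴴ) i k := by
      ext i k
      apply setIntegral_congr_fun measurableSet_Ioi
      intro t ht
      dsimp only
      rw [hres t ht, hconj3]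
    rw [hib]
    exact integral_conj_rep (volume.restrict (Ioi 0)) U (Uᴴ * A * U)
      (fun t a => (t + lam a)⁻¹) (fun t b => (t + lam b)⁻¹) kint
  -- square root data
  set r : Fin n → ℝ := fun a => lam a ^ ((2:ℝ)⁻¹) with hrdef
  have hr : ∀ a, r a * r a = lam a := by
    intro a
    rw [hrdef]
    dsimp only
    rw [← Real.rpow_add (hlam a)]
    norm_num
  have hsqrt : cfc (fun x : ℝ => x ^ ((2:ℝ)⁻¹)) σ
      = U * Matrix.diagonal (fun a => ((r a : ℝ) : ℂ)) * Uᴴ := hcfc _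
  have h₁ : ∀ A, Minv (Mop A) = A := by
    intro A
    rw [hMop' A, hMinv']
    rw [hsand]
    have : (Matrix.of fun a b => ((kval a b : ℝ) : ℂ) *
        (Matrix.of fun a b => ((mval a b : ℝ) : ℂ) * (Uᴴ * A * U) a b) a b) = Uᴴ * A * U := by
      ext a b
      simp only [Matrix.of_apply]
      rw [← mul_assoc, ← Complex.ofReal_mul, hkm, Complex.ofReal_one, one_mul]
    rw [this, hsand']
  have h₂ : ∀ A, Mop (Minv A) = A := by
    intro A
    rw [hMinv' A, hMop']
    rw [hsand]
    have : (Matrix.of fun a b => ((mval a b : ℝ) : ℂ) *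
        (Matrix.of fun a b => ((kval a b : ℝ) : ℂ) * (Uᴴ * A * U) a b) a b) = Uᴴ * A * U := by
      ext a b
      simp only [Matrix.of_apply]
      rw [← mul_assoc, ← Complex.ofReal_mul, mul_comm (mval a b), hkm,
        Complex.ofReal_one, one_mul]
    rw [this, hsand']
  -- the composite map in diagonal form, and the integral formula
  have hWform1 : ∀ t : ℝ, t ∈ Set.Ioi (0:ℝ) →
      cfc (fun x : ℝ => x ^ ((2:ℝ)⁻¹)) σ * ((t : ℂ) • (1 : Matrix (Fin n) (Fin n) ℂ) + σ)⁻¹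
        = U * Matrix.diagonal (fun a => ((r a * (t + lam a)⁻¹ : ℝ) : ℂ)) * Uᴴ := by
    intro t ht
    rw [hsqrt, hres t ht, hmulUD, Matrix.diagonal_mul_diagonal]
    have hd : (fun a => ((r a : ℝ) : ℂ) * (((t + lam a)⁻¹ : ℝ) : ℂ))
        = fun a => ((r a * (t + lam a)⁻¹ : ℝ) : ℂ) := by
      funext a
      rw [← Complex.ofReal_mul]
    rw [hd]
  have hWform2 : ∀ t : ℝ, t ∈ Set.Ioi (0:ℝ) →
      ((t : ℂ) • (1 : Matrix (Fin n) (Fin n) ℂ) + σ)⁻¹ * cfc (fun x : ℝ => x ^ ((2:ℝ)⁻¹)) σ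
        = U * Matrix.diagonal (fun a => ((r a * (t + lam a)⁻¹ : ℝ) : ℂ)) * Uᴴ := by
    intro t ht
    rw [hres t ht, hsqrt, hmulUD, Matrix.diagonal_mul_diagonal]
    have hd : (fun a => (((t + lam a)⁻¹ : ℝ) : ℂ) * ((r a : ℝ) : ℂ))
        = fun a => ((r a * (t + lam a)⁻¹ : ℝ) : ℂ) := by
      funext a
      rw [← Complex.ofReal_mul, mul_comm]
    rw [hd]
  have hvint : ∀ a b : Fin n, Integrable
      (fun t => (r a * (t + lam a)⁻¹) * ((t + lam b)⁻¹ * r b)) (volume.restrict (Ioi 0)) := by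
    intro a b
    have he : (fun t : ℝ => (r a * (t + lam a)⁻¹) * ((t + lam b)⁻¹ * r b))
        = fun t => (r a * r b) * ((t + lam a)⁻¹ * (t + lam b)⁻¹) := by
      funext t
      ring
    rw [he]
    exact (kint a b).const_mul _
  have h₃ : ∀ A, Minv (cfc (fun x : ℝ => x ^ ((2:ℝ)⁻¹)) σ * A * cfc (fun x : ℝ => x ^ ((2:ℝ)⁻¹)) σ)
      = Matrix.of fun i k =>
          ∫ t in Set.Ioi (0:ℝ),
            ((cfc (fun x : ℝ => x ^ ((2:ℝ)⁻¹)) σ *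
                ((t : ℂ) • (1 : Matrix (Fin n) (Fin n) ℂ) + σ)⁻¹) * A *
              (((t : ℂ) • (1 : Matrix (Fin n) (Fin n) ℂ) + σ)⁻¹ *
                cfc (fun x : ℝ => x ^ ((2:ℝ)⁻¹)) σ)) i k := by
    intro A
    have hLHS : Minv (cfc (fun x : ℝ => x ^ ((2:ℝ)⁻¹)) σ * A * cfc (fun x : ℝ => x ^ ((2:ℝ)⁻¹)) σ)
        = U * (Matrix.of fun a b =>
            ((r a * r b * kval a b : ℝ) : ℂ) * (Uᴴ * A * U) a b) * Uᴴ := by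
      rw [hMinv']
      have hA1 : Uᴴ * (cfc (fun x : ℝ => x ^ ((2:ℝ)⁻¹)) σ * A *
          cfc (fun x : ℝ => x ^ ((2:ℝ)⁻¹)) σ) * U
          = Matrix.diagonal (fun a => ((r a : ℝ) : ℂ)) * (Uᴴ * A * U) *
            Matrix.diagonal (fun b => ((r b : ℝ) : ℂ)) := by
        rw [hsqrt, hconj3, hsand]
      simp only [hA1]
      have h2 : (Matrix.of fun a b => ((kval a b : ℝ) : ℂ) *
          (Matrix.diagonal (fun a => ((r a : ℝ) : ℂ)) * (Uᴴ * A * U) *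
            Matrix.diagonal (fun b => ((r b : ℝ) : ℂ))) a b)
          = Matrix.of fun a b => ((r a * r b * kval a b : ℝ) : ℂ) * (Uᴴ * A * U) a b := by
        ext a b
        simp only [Matrix.of_apply, Matrix.diagonal_mul, Matrix.mul_diagonal]
        push_cast
        ring
      rw [h2]
    have hRHS : (Matrix.of fun i k =>
          ∫ t in Set.Ioi (0:ℝ),
            ((cfc (fun x : ℝ => x ^ ((2:ℝ)⁻¹)) σ *
                ((t : ℂ) • (1 : Matrix (Fin n) (Fin n) ℂ) + σ)⁻¹) * A *
              (((t : ℂ) • (1 : Matrix (Fin n) (Fin n) ℂ) + σ)⁻¹ *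
                cfc (fun x : ℝ => x ^ ((2:ℝ)⁻¹)) σ)) i k)
        = U * (Matrix.of fun a b =>
            ((r a * r b * kval a b : ℝ) : ℂ) * (Uᴴ * A * U) a b) * Uᴴ := by
      have hib : (Matrix.of fun i k =>
          ∫ t in Set.Ioi (0:ℝ),
            ((cfc (fun x : ℝ => x ^ ((2:ℝ)⁻¹)) σ *
                ((t : ℂ) • (1 : Matrix (Fin n) (Fin n) ℂ) + σ)⁻¹) * A *
              (((t : ℂ) • (1 : Matrix (Fin n) (Fin n) ℂ) + σ)⁻¹ *
                cfc (fun x : ℝ => x ^ ((2:ℝ)⁻¹)) σ)) i k)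
          = Matrix.of fun i k => ∫ t in Set.Ioi (0:ℝ),
              (U * (Matrix.diagonal (fun a => ((r a * (t + lam a)⁻¹ : ℝ) : ℂ)) * (Uᴴ * A * U) *
                Matrix.diagonal (fun b => (((t + lam b)⁻¹ * r b : ℝ) : ℂ))) * Uᴴ) i k := by
        ext i k
        apply setIntegral_congr_fun measurableSet_Ioi
        intro t ht
        dsimp only
        rw [hWform1 t ht, hWform2 t ht]
        have : Matrix.diagonal (fun b => ((r b * (t + lam b)⁻¹ : ℝ) : ℂ))
            = Matrix.diagonal (fun b => (((t + lam b)⁻¹ * r b : ℝ) : ℂ)) := by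
          have hfun : (fun b => ((r b * (t + lam b)⁻¹ : ℝ) : ℂ))
              = fun b => (((t + lam b)⁻¹ * r b : ℝ) : ℂ) := funext fun b => by rw [mul_comm]
          rw [hfun]
        conv_lhs => rw [this]
        rw [← this, hconj3, this]
      rw [hib]
      rw [integral_conj_rep (volume.restrict (Ioi 0)) U (Uᴴ * A * U)
        (fun t a => r a * (t + lam a)⁻¹) (fun t b => (t + lam b)⁻¹ * r b) hvint]
      congr 1
      congr 1
      ext a b
      simp only [Matrix.of_apply]
      congr 2
      show (∫ t in Ioi (0:ℝ), (r a * (t + lam a)⁻¹) * ((t + lam b)⁻¹ * r b))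
          = r a * r b * kval a b
      rw [show (fun t : ℝ => (r a * (t + lam a)⁻¹) * ((t + lam b)⁻¹ * r b))
          = fun t : ℝ => (r a * r b) * ((t + lam a)⁻¹ * (t + lam b)⁻¹) from
          funext fun t => by ring]
      rw [MeasureTheory.integral_const_mul]
    exact hLHS.trans hRHS.symm
  have h₄ : Minv (cfc (fun x : ℝ => x ^ ((2:ℝ)⁻¹)) σ * 1 * cfc (fun x : ℝ => x ^ ((2:ℝ)⁻¹)) σ)
      = 1 := by
    rw [Matrix.mul_one, hMinv']
    have hA1 : Uᴴ * (cfc (fun x : ℝ => x ^ ((2:ℝ)⁻¹)) σ * cfc (fun x : ℝ => x ^ ((2:ℝ)⁻¹)) σ) * U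
        = Matrix.diagonal (fun a => ((lam a : ℝ) : ℂ)) := by
      rw [hsqrt, hmulUD, hsand, Matrix.diagonal_mul_diagonal]
      have hfun : (fun a => ((r a : ℝ) : ℂ) * ((r a : ℝ) : ℂ))
          = fun a => ((lam a : ℝ) : ℂ) := funext fun a => by rw [← Complex.ofReal_mul, hr a]
      rw [hfun]
    simp only [hA1]
    have h2 : (Matrix.of fun a b => ((kval a b : ℝ) : ℂ) *
        Matrix.diagonal (fun a => ((lam a : ℝ) : ℂ)) a b) = (1 : Matrix (Fin n) (Fin n) ℂ) := by
      ext a b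
      by_cases hab : a = b
      · subst hab
        rw [Matrix.of_apply, Matrix.diagonal_apply_eq, Matrix.one_apply_eq, ← Complex.ofReal_mul]
        have hmaa : mval a a = lam a := by
          rw [hmvaldef]
          exact m_eq_of_eq (hlam a)
        have : kval a a * lam a = 1 := by
          have := hkm a a
          rwa [hmaa] at this
        rw [this]
        simp
      · rw [Matrix.of_apply, Matrix.diagonal_apply_ne _ hab, Matrix.one_apply_ne hab, mul_zero]
    rw [h2, Matrix.mul_one, hU1]
  refine ⟨h₁, h₂, h₃, h₄, ?_⟩
  intro k B hB
  set W : ℝ → Matrix (Fin n) (Fin n) ℂ := fun t =>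
    U * Matrix.diagonal (fun a => ((r a * (t + lam a)⁻¹ : ℝ) : ℂ)) * Uᴴ with hWdef
  have hWherm : ∀ t, (W t)ᴴ = W t := by
    intro t
    rw [hWdef]
    dsimp only
    rw [Matrix.conjTranspose_mul, Matrix.conjTranspose_mul, Matrix.conjTranspose_conjTranspose,
      Matrix.diagonal_conjTranspose]
    have hfun : star (fun a => ((r a * (t + lam a)⁻¹ : ℝ) : ℂ))
        = fun a => ((r a * (t + lam a)⁻¹ : ℝ) : ℂ) := by
      funext a
      simp [Complex.conj_ofReal]
    rw [hfun]
    simp only [Matrix.mul_assoc]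
  have hWstar : ∀ t (i j : Fin n), star (W t i j) = W t j i := by
    intro t i j
    calc star (W t i j) = (W t)ᴴ j i := rfl
      _ = W t j i := by rw [hWherm]
  have hWapply : ∀ t (i j : Fin n),
      W t i j = ∑ c : Fin n, (U i c * Uᴴ c j) * ((r c * (t + lam c)⁻¹ : ℝ) : ℂ) := by
    intro t i j
    rw [hWdef]
    dsimp only
    simp only [Matrix.mul_apply, Matrix.diagonal_apply, ite_mul, mul_ite, mul_zero, zero_mul,
      Finset.sum_ite_eq, Finset.sum_ite_eq', Finset.mem_univ, if_true, Finset.sum_mul]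
    exact Finset.sum_congr rfl fun c _ => by ring
  have hWint : ∀ i j i' j' : Fin n,
      Integrable (fun t => W t i j * W t i' j') (volume.restrict (Ioi 0)) := by
    intro i j i' j'
    have he : (fun t => W t i j * W t i' j')
        = fun t => ∑ c : Fin n, ∑ d : Fin n,
            ((U i c * Uᴴ c j) * (U i' d * Uᴴ d j')) *
              (((r c * r d) * ((t + lam c)⁻¹ * (t + lam d)⁻¹) : ℝ) : ℂ) := by
      funext t
      rw [hWapply, hWapply, Finset.sum_mul_sum]
      refine Finset.sum_congr rfl fun c _ => Finset.sum_congr rfl fun d _ => ?_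
      push_cast
      ring
    rw [he]
    apply integrable_finset_sum
    intro c _
    apply integrable_finset_sum
    intro d _
    apply Integrable.const_mul
    apply Complex.ofRealCLM.integrable_comp
    exact (kint c d).const_mul _
  set G : ℝ → Matrix (Fin n × Fin k) (Fin n × Fin k) ℂ := fun t =>
    Matrix.of fun p a : Fin n × Fin k =>
      W t p.1 a.1 * (if p.2 = a.2 then (1:ℂ) else 0) with hGdef
  have hCentry : ∀ t (p q : Fin n × Fin k),
      (G t * B * (G t)ᴴ) p q
        = ∑ b1 : Fin n, ∑ a1 : Fin n,
            (W t p.1 a1 * W t b1 q.1) * B (a1, p.2) (b1, q.2) := by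
    intro t p q
    rw [hGdef]
    simp only [Matrix.mul_apply, Matrix.of_apply, Matrix.conjTranspose_apply, star_mul',
      apply_ite (star : ℂ → ℂ), star_one, star_zero, hWstar, Fintype.sum_prod_type,
      Finset.sum_mul, mul_ite, ite_mul, mul_zero, zero_mul, mul_one, one_mul,
      Finset.sum_ite_eq, Finset.sum_ite_eq', Finset.mem_univ, if_true]
    refine Finset.sum_congr rfl fun b1 _ => Finset.sum_congr rfl fun a1 _ => ?_
    ring
  have hCint : ∀ p q : Fin n × Fin k,
      Integrable (fun t => (G t * B * (G t)ᴴ) p q) (volume.restrict (Ioi 0)) := by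
    intro p q
    have he : (fun t => (G t * B * (G t)ᴴ) p q)
        = fun t => ∑ b1 : Fin n, ∑ a1 : Fin n,
            (W t p.1 a1 * W t b1 q.1) * B (a1, p.2) (b1, q.2) :=
      funext fun t => hCentry t p q
    rw [he]
    apply integrable_finset_sum
    intro b1 _
    apply integrable_finset_sum
    intro a1 _
    exact (hWint _ _ _ _).mul_const _
  have hmain : (Matrix.of fun p q : Fin n × Fin k =>
        (Minv (cfc (fun x : ℝ => x ^ ((2:ℝ)⁻¹)) σ *
            (Matrix.of fun i j => B (i, p.2) (j, q.2)) *
            cfc (fun x : ℝ => x ^ ((2:ℝ)⁻¹)) σ)) p.1 q.1)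
      = Matrix.of fun p q : Fin n × Fin k => ∫ t in Ioi (0:ℝ), (G t * B * (G t)ᴴ) p q := by
    ext p q
    simp only [Matrix.of_apply]
    rw [h₃ (Matrix.of fun i j => B (i, p.2) (j, q.2))]
    simp only [Matrix.of_apply]
    apply setIntegral_congr_fun measurableSet_Ioi
    intro t ht
    dsimp only
    rw [hWform1 t ht, hWform2 t ht]
    show (W t * (Matrix.of fun i j => B (i, p.2) (j, q.2)) * W t) p.1 q.1
        = (G t * B * (G t)ᴴ) p q
    rw [hCentry t p q]
    simp only [Matrix.mul_apply, Matrix.of_apply, Finset.sum_mul]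
    refine Finset.sum_congr rfl fun b1 _ => Finset.sum_congr rfl fun a1 _ => ?_
    ring
  rw [hmain]
  exact posSemidef_integral (volume.restrict (Ioi 0)) (fun t => G t * B * (G t)ᴴ)
    (fun t => hB.mul_mul_conjTranspose_same (G t)) hCint
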